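/- arXiv:0903.3614 — 4 statements merged into one kernel-verified Lean document; each statement's English description precedes it below -/
import Mathlib

section
/- Let κ be an infinite regular cardinal and σ an infinite cardinal with σ^{ℵ₀} = σ. Suppose u is a finite-trace system for (κ, σ), i.e. u assigns to each function f : κ → σ and each ordinal α < κ a finite subset u(f,α) ⊆ σ such that whenever e : σ → σ and f₁, f₂ : κ → σ satisfy f₁ = e ∘ f₂, then u(f₁,α₁) ⊆ e '' u(f₂,α₂) (the image of u(f₂,α₂) under e) for all α₁, α₂ < κ. Assume moreover: (b) for every f : κ → σ, every α < κ and every i ∈ u(f,α), the set {β < κ : f(β) = i} is unbounded in κ; and (c) u(f,α) ≠ ∅ for at least one pair (f, α). Then there exists a uniform σ⁺-complete ultrafilter on κ. -/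
open Cardinal

/-- An ultrafilter `D` on `X` is `μ⁺`-complete: every family of at most `μ` members of `D`
has intersection in `D`. -/
def Ultrafilter.CompleteAtMost {X : Type} (D : Ultrafilter X) (μ : Cardinal.{0}) : Prop :=
  ∀ (ι : Type) (B : ι → Set X), #ι ≤ μ → (∀ i, B i ∈ D) → (⋂ i, B i) ∈ D

/-- An ultrafilter is uniform when all its members have full cardinality. -/
def Ultrafilter.Uniform {X : Type} (D : Ultrafilter X) : Prop :=
  ∀ A ∈ D, #A = #X

/-- Let `κ` be an infinite regular cardinal, `σ` infinite with `σ ^ ℵ₀ = σ`.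
If `u` is a finite-trace system for `(κ, σ)` (each `u f α` is a finite subset of `σ`, and
`f₁ = e ∘ f₂` implies `u f₁ α₁ ⊆ e '' u f₂ α₂`), every `i ∈ u f α` is attained by `f`
unboundedly often, and some `u f α` is nonempty, then there is a uniform `σ⁺`-complete
ultrafilter on `κ`. -/
theorem stmt_2 (κ σ : Cardinal.{0}) (hκreg : κ.IsRegular) (hκinf : ℵ₀ ≤ κ)
    (hσinf : ℵ₀ ≤ σ) (hσ : σ ^ ℵ₀ = σ)
    (u : (κ.ord.ToType → σ.ord.ToType) → κ.ord.ToType → Set σ.ord.ToType)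
    (hufin : ∀ f α, (u f α).Finite)
    (hutrace : ∀ (e : σ.ord.ToType → σ.ord.ToType)
        (f₁ f₂ : κ.ord.ToType → σ.ord.ToType), f₁ = e ∘ f₂ →
        ∀ α₁ α₂, u f₁ α₁ ⊆ e '' u f₂ α₂)
    (hunb : ∀ f α i, i ∈ u f α → ∀ γ : κ.ord.ToType, ∃ β : κ.ord.ToType,
        γ ≤ β ∧ f β = i)
    (hne : ∃ f α, (u f α).Nonempty) :
    ∃ D : Ultrafilter κ.ord.ToType, D.CompleteAtMost σ ∧ D.Uniform := by
  classical
  have hmkS : #σ.ord.ToType = σ := by rw [Cardinal.mk_toType, Cardinal.card_ord]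
  have hmkX : #κ.ord.ToType = κ := by rw [Cardinal.mk_toType, Cardinal.card_ord]
  have hSinf : ℵ₀ ≤ #σ.ord.ToType := by rw [hmkS]; exact hσinf
  have hnt : Nontrivial σ.ord.ToType := by
    rw [← Cardinal.one_lt_iff_nontrivial]
    exact lt_of_lt_of_le Cardinal.one_lt_aleph0 hSinf
  haveI hSne : Nonempty σ.ord.ToType := inferInstance
  obtain ⟨α₀⟩ : Nonempty κ.ord.ToType := by
    rw [Ordinal.toType_nonempty_iff_ne_zero]
    exact hκreg.ord_pos.ne'
  -- the trace of a function (independent of the ordinal argument)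
  set T : (κ.ord.ToType → σ.ord.ToType) → Set σ.ord.ToType := fun f => u f α₀ with hTdef
  have hTfin : ∀ f, (T f).Finite := fun f => hufin f α₀
  have hTsub : ∀ f t, t ∈ T f → ∃ β, f β = t := fun f t ht => by
    obtain ⟨β, _, hβ⟩ := hunb f α₀ t ht α₀; exact ⟨β, hβ⟩
  have hTincl : ∀ (e) (f g : κ.ord.ToType → σ.ord.ToType), f = e ∘ g → T f ⊆ e '' T g :=
    fun e f g h => hutrace e f g h α₀ α₀
  -- pairing and ω-coding
  obtain ⟨p⟩ : Nonempty (σ.ord.ToType ≃ σ.ord.ToType × σ.ord.ToType) := by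
    have hps : #(σ.ord.ToType × σ.ord.ToType) = #σ.ord.ToType := by
      rw [Cardinal.mk_prod, Cardinal.lift_id]
      exact Cardinal.mul_eq_self hSinf
    exact Cardinal.eq.1 hps.symm
  obtain ⟨emb⟩ : Nonempty ((ℕ → σ.ord.ToType) ↪ σ.ord.ToType) := by
    rw [← Cardinal.le_def, ← Cardinal.power_def, Cardinal.mk_nat, hmkS, hσ]
  -- trace sizes are bounded
  have hbdd : ∃ N, ∀ f, (T f).ncard ≤ N := by
    by_contra hcon
    push_neg at hcon
    choose F hF using hcon
    set H : κ.ord.ToType → σ.ord.ToType := fun β => emb (fun k => F k β) with hH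
    have hdec : ∀ k : ℕ, F k = (fun s => Function.invFun emb s k) ∘ H := fun k => by
      funext β
      simp only [hH, Function.comp_apply]
      rw [Function.leftInverse_invFun emb.injective]
    have hle : ∀ k, (T (F k)).ncard ≤ (T H).ncard := fun k => by
      calc (T (F k)).ncard ≤ ((fun s => Function.invFun emb s k) '' T H).ncard :=
            Set.ncard_le_ncard (hTincl _ _ _ (hdec k)) ((hTfin H).image _)
        _ ≤ (T H).ncard := Set.ncard_image_le (hTfin H)
    exact absurd (hle ((T H).ncard)) (not_le.2 (hF _))
  obtain ⟨N, hN⟩ := hbdd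
  -- a function with maximal trace
  have hrange_bdd : BddAbove (Set.range fun f => (T f).ncard) :=
    ⟨N, by rintro _ ⟨f, rfl⟩; exact hN f⟩
  obtain ⟨f₁, α₁, t₁', ht₁'⟩ := hne
  set M := sSup (Set.range fun f => (T f).ncard) with hM
  have hMmem : M ∈ Set.range (fun f => (T f).ncard) :=
    Nat.sSup_mem ⟨(T f₁).ncard, ⟨f₁, rfl⟩⟩ hrange_bdd
  obtain ⟨hstar, hhstar0⟩ := hMmem
  have hhstar : (T hstar).ncard = M := hhstar0
  have hmax : ∀ f, (T f).ncard ≤ M := fun f => le_csSup hrange_bdd ⟨f, rfl⟩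
  have hTα : t₁' ∈ T f₁ := by
    have := hutrace id f₁ f₁ rfl α₁ α₀
    simpa using this ht₁'
  have hMpos : 0 < M := by
    have h1 : 0 < (T f₁).ncard := (Set.ncard_pos (hTfin f₁)).2 ⟨t₁', hTα⟩
    exact lt_of_lt_of_le h1 (hmax f₁)
  obtain ⟨istar, histar⟩ : (T hstar).Nonempty :=
    (Set.ncard_pos (hTfin hstar)).1 (by rw [hhstar]; exact hMpos)
  -- key lemma: factorizations of hstar act bijectively on traces
  have key : ∀ h e, hstar = e ∘ h →
      Set.InjOn e (T h) ∧ e '' T h = T hstar ∧ (T h).ncard = M := by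
    intro h e he
    have hsub : T hstar ⊆ e '' T h := hTincl e hstar h he
    have h1 : M ≤ (e '' T h).ncard := by
      rw [← hhstar]; exact Set.ncard_le_ncard hsub ((hTfin h).image e)
    have h2 : (e '' T h).ncard ≤ (T h).ncard := Set.ncard_image_le (hTfin h)
    have hcardh : (T h).ncard = M := le_antisymm (hmax h) (le_trans h1 h2)
    have hcardim : (e '' T h).ncard = (T h).ncard :=
      le_antisymm h2 (by rw [hcardh]; exact h1)
    have hinj : Set.InjOn e (T h) := Set.injOn_of_ncard_image_eq hcardim (hTfin h)
    have himg : e '' T h = T hstar :=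
      (Set.eq_of_subset_of_ncard_le hsub
        (by rw [hcardim, hcardh, hhstar]) ((hTfin h).image e)).symm
    exact ⟨hinj, himg, hcardh⟩
  have hagree : ∀ (h : κ.ord.ToType → σ.ord.ToType) (e₁ e₂), hstar = e₁ ∘ h →
      hstar = e₂ ∘ h → ∀ t ∈ T h, e₁ t = e₂ t := by
    intro h e₁ e₂ h1 h2 t ht
    obtain ⟨β, hβ⟩ := hTsub h t ht
    calc e₁ t = e₁ (h β) := by rw [hβ]
      _ = hstar β := (congrFun h1 β).symm
      _ = e₂ (h β) := congrFun h2 β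
      _ = e₂ t := by rw [hβ]
  have hsel : ∀ h e, hstar = e ∘ h → ∃ t ∈ T h, e t = istar := by
    intro h e he
    obtain ⟨-, himg, -⟩ := key h e he
    rw [← himg] at histar
    obtain ⟨t, ht, hte⟩ := histar
    exact ⟨t, ht, hte⟩
  -- the main factorization lemma
  have hfactor : ∀ (h g : κ.ord.ToType → σ.ord.ToType) (e d), hstar = e ∘ g → g = d ∘ h →
      ∀ t ∈ T h, e (d t) = istar → d t ∈ T g ∧ ∀ t' ∈ T g, e t' = istar → d t = t' := by
    intro h g e d heg hgd t ht hedt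
    have hh : hstar = (e ∘ d) ∘ h := by rw [heg, hgd]; rfl
    obtain ⟨hinjh, -, hcardh⟩ := key h (e ∘ d) hh
    obtain ⟨hinjg, -, hcardg⟩ := key g e heg
    have hdinj : Set.InjOn d (T h) := fun a ha b hb hab => hinjh ha hb (congrArg e hab)
    have hTg : d '' T h = T g := by
      have hsub : T g ⊆ d '' T h := hTincl d g h hgd
      have hc : (d '' T h).ncard = (T h).ncard := Set.ncard_image_of_injOn hdinj
      exact (Set.eq_of_subset_of_ncard_le hsub
        (by rw [hc, hcardh, ← hcardg]) ((hTfin h).image d)).symm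
    have hdt : d t ∈ T g := hTg ▸ ⟨t, ht, rfl⟩
    exact ⟨hdt, fun t' ht' het' => hinjg hdt ht' (by rw [hedt, het'])⟩
  -- the membership predicate of the ultrafilter
  set mem : Set κ.ord.ToType → Prop := fun A =>
    ∃ h e t, hstar = e ∘ h ∧ t ∈ T h ∧ e t = istar ∧ h ⁻¹' {t} ⊆ A with hmemdef
  have hmem_univ : mem Set.univ := ⟨hstar, id, istar, rfl, histar, rfl, Set.subset_univ _⟩
  have hmem_mono : ∀ A B, A ⊆ B → mem A → mem B := by
    rintro A B hAB ⟨h, e, t, he, ht, het, hsub⟩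
    exact ⟨h, e, t, he, ht, het, hsub.trans hAB⟩
  have hmem_ne : ∀ A, mem A → A.Nonempty := by
    rintro A ⟨h, e, t, he, ht, het, hsub⟩
    obtain ⟨β, hβ⟩ := hTsub h t ht
    exact ⟨β, hsub (by simp [hβ])⟩
  have hmem_inter : ∀ A B, mem A → mem B → mem (A ∩ B) := by
    rintro A B ⟨h₁, e₁, t₁, he₁, ht₁, het₁, hsub₁⟩ ⟨h₂, e₂, t₂, he₂, ht₂, het₂, hsub₂⟩
    set h : κ.ord.ToType → σ.ord.ToType := fun β => p.symm (h₁ β, h₂ β) with hh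
    have hd₁ : h₁ = (fun s => (p s).1) ∘ h := by
      funext β; simp [hh]
    have hd₂ : h₂ = (fun s => (p s).2) ∘ h := by
      funext β; simp [hh]
    have hE : hstar = (e₁ ∘ fun s => (p s).1) ∘ h := by rw [he₁, hd₁]; rfl
    have hE2 : hstar = (e₂ ∘ fun s => (p s).2) ∘ h := by rw [he₂, hd₂]; rfl
    obtain ⟨t, ht, hEt⟩ := hsel h (e₁ ∘ fun s => (p s).1) hE
    have hE2t : e₂ ((p t).2) = istar := by
      have hag := hagree h _ _ hE hE2 t ht
      exact hag.symm.trans hEt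
    obtain ⟨-, hp1unique⟩ := hfactor h h₁ e₁ (fun s => (p s).1) he₁ hd₁ t ht hEt
    obtain ⟨-, hp2unique⟩ := hfactor h h₂ e₂ (fun s => (p s).2) he₂ hd₂ t ht hE2t
    have ht1 : (p t).1 = t₁ := hp1unique t₁ ht₁ het₁
    have ht2 : (p t).2 = t₂ := hp2unique t₂ ht₂ het₂
    refine ⟨h, (e₁ ∘ fun s => (p s).1), t, hE, ht, hEt, fun β hβ => ?_⟩
    have hβt : h β = t := hβ
    constructor
    · apply hsub₁
      have : h₁ β = t₁ := by rw [hd₁]; show (p (h β)).1 = t₁; rw [hβt, ht1]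
      simp [this]
    · apply hsub₂
      have : h₂ β = t₂ := by rw [hd₂]; show (p (h β)).2 = t₂; rw [hβt, ht2]
      simp [this]
  have hmem_ultra : ∀ A : Set κ.ord.ToType, mem A ∨ mem Aᶜ := by
    intro A
    obtain ⟨s0, s1, hs01⟩ := exists_pair_ne σ.ord.ToType
    set g : κ.ord.ToType → σ.ord.ToType :=
      fun β => p.symm (hstar β, if β ∈ A then s0 else s1) with hg
    have hd : hstar = (fun s => (p s).1) ∘ g := by
      funext β; simp [hg]
    obtain ⟨t, ht, hEt⟩ := hsel g (fun s => (p s).1) hd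
    obtain ⟨β₀, hβ₀⟩ := hTsub g t ht
    have hpt : p t = (hstar β₀, if β₀ ∈ A then s0 else s1) := by
      rw [← hβ₀]; simp [hg]
    have hsnd : ∀ β, g β = t → (if β ∈ A then s0 else s1) = (if β₀ ∈ A then s0 else s1) := by
      intro β hβt
      have h1 : p (g β) = p t := congrArg p hβt
      rw [hpt] at h1
      simpa [hg] using congrArg Prod.snd h1
    by_cases hA : β₀ ∈ A
    · left
      refine ⟨g, _, t, hd, ht, hEt, fun β hβ => ?_⟩
      have h2 := hsnd β hβ
      rw [if_pos hA] at h2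
      by_contra hβA
      rw [if_neg hβA] at h2
      exact hs01 h2.symm
    · right
      refine ⟨g, _, t, hd, ht, hEt, fun β hβ => ?_⟩
      have h2 := hsnd β hβ
      rw [if_neg hA] at h2
      intro hβA
      rw [if_pos hβA] at h2
      exact hs01 h2
  -- build the ultrafilter
  set Fil : Filter κ.ord.ToType :=
    { sets := {A | mem A}
      univ_sets := hmem_univ
      sets_of_superset := fun hA hAB => hmem_mono _ _ hAB hA
      inter_sets := fun hA hB => hmem_inter _ _ hA hB } with hFil
  set D : Ultrafilter κ.ord.ToType := Ultrafilter.ofComplNotMemIff Fil (by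
    intro s
    constructor
    · intro hc
      exact (hmem_ultra s).resolve_right hc
    · intro hs hc
      have h0 := hmem_inter _ _ hs hc
      rw [Set.inter_compl_self] at h0
      obtain ⟨x, hx⟩ := hmem_ne _ h0
      exact hx) with hD
  have hDm : ∀ A, A ∈ D ↔ mem A := fun A => Iff.rfl
  refine ⟨D, ?_, ?_⟩
  · -- σ⁺-completeness
    intro ι B hι hB
    by_contra hcon
    have hC : (⋂ i, B i)ᶜ ∈ D := (Ultrafilter.compl_mem_iff_notMem).2 hcon
    obtain ⟨β₀', hβ₀'⟩ := hmem_ne _ ((hDm _).1 hC)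
    have hι' : ∃ i, β₀' ∉ B i := by
      by_contra hno
      push_neg at hno
      exact hβ₀' (Set.mem_iInter.2 hno)
    obtain ⟨i₀, -⟩ := hι'
    obtain ⟨code⟩ : Nonempty (ι ↪ σ.ord.ToType) := by
      rw [← Cardinal.le_def, hmkS]; exact hι
    set jf : κ.ord.ToType → ι :=
      fun β => if hβ : ∃ i, β ∉ B i then hβ.choose else i₀ with hjf
    have hjf_spec : ∀ β, β ∈ (⋂ i, B i)ᶜ → β ∉ B (jf β) := by
      intro β hβ
      have hβ' : ∃ i, β ∉ B i := by
        by_contra hno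
        push_neg at hno
        exact hβ (Set.mem_iInter.2 hno)
      simp only [hjf, dif_pos hβ']
      exact hβ'.choose_spec
    set g : κ.ord.ToType → σ.ord.ToType :=
      fun β => p.symm (hstar β, code (jf β)) with hg
    have hd : hstar = (fun s => (p s).1) ∘ g := by
      funext β; simp [hg]
    obtain ⟨t, ht, hEt⟩ := hsel g (fun s => (p s).1) hd
    have hgD : g ⁻¹' {t} ∈ D := (hDm _).2 ⟨g, _, t, hd, ht, hEt, subset_rfl⟩
    have h1 : ((⋂ i, B i)ᶜ ∩ g ⁻¹' {t}) ∈ D :=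
      (hDm _).2 (hmem_inter _ _ ((hDm _).1 hC) ((hDm _).1 hgD))
    obtain ⟨β₀, hβ₀C, hβ₀g⟩ := hmem_ne _ ((hDm _).1 h1)
    have h2 : (B (jf β₀) ∩ ((⋂ i, B i)ᶜ ∩ g ⁻¹' {t})) ∈ D :=
      (hDm _).2 (hmem_inter _ _ ((hDm _).1 (hB (jf β₀))) ((hDm _).1 h1))
    obtain ⟨β₁, hβ₁B, hβ₁C, hβ₁g⟩ := hmem_ne _ ((hDm _).1 h2)
    have hgg : g β₁ = g β₀ := by
      have e1 : g β₁ = t := hβ₁g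
      have e2 : g β₀ = t := hβ₀g
      rw [e1, e2]
    have hpair : (hstar β₁, code (jf β₁)) = (hstar β₀, code (jf β₀)) := by
      have := congrArg p hgg
      simpa [hg] using this
    have hjj : jf β₁ = jf β₀ := code.injective (congrArg Prod.snd hpair)
    exact hjf_spec β₁ hβ₁C (hjj ▸ hβ₁B)
  · -- uniformity
    intro A hA
    obtain ⟨h, e, t, he, ht, het, hsub⟩ := (hDm A).1 hA
    refine le_antisymm (Cardinal.mk_set_le A) ?_
    rw [hmkX]
    have hub : Set.Unbounded (· < ·) A := by
      intro a
      obtain ⟨β, hβa, hβ⟩ := hunb h α₀ t ht a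
      exact ⟨β, hsub (by simp [hβ]), not_lt.2 hβa⟩
    haveI : IsWellOrder κ.ord.ToType (· < ·) := isWellOrder_lt
    have hcof := Order.cof_le (s := A) (fun a => by
      obtain ⟨b, hb, hnl⟩ := hub a
      exact ⟨b, hb, not_lt.1 hnl⟩)
    rwa [Ordinal.cof_toType, hκreg.cof_eq] at hcof
end

section
/- Let κ be an infinite cardinal and σ an infinite cardinal with σ^{ℵ₀} = σ. Suppose u is a finite-trace system for (κ, σ), i.e. u assigns to each function f : κ → σ and each ordinal α < κ a finite subset u(f,α) ⊆ σ such that whenever e : σ → σ and f₁, f₂ : κ → σ satisfy f₁ = e ∘ f₂, then u(f₁,α₁) ⊆ e '' u(f₂,α₂) (the image of u(f₂,α₂) under e) for all α₁, α₂ < κ. Then there exist f⁎ : κ → σ and α⁎ < κ such that: (i) for every f : κ → σ and α < κ, if f⁎ = e ∘ f for some e : σ → σ, then the finite sets u(f,α) and u(f⁎,α⁎) have the same number of elements; and (ii) moreover, for any such f, α and any e : σ → σ with f⁎ = e ∘ f, the function e maps u(f,α) bijectively onto u(f⁎,α⁎). -/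
open Cardinal

/-- Let `κ` be infinite and `σ` infinite with `σ ^ ℵ₀ = σ`. If `u` is a
finite-trace system for `(κ, σ)`, then there are `f⁎ : κ → σ` and `α⁎ < κ` such that whenever
`f⁎ = e ∘ f`, the finite sets `u f α` and `u f⁎ α⁎` have the same number of elements, and
moreover any such `e` maps `u f α` bijectively onto `u f⁎ α⁎`. -/
theorem stmt_3 (κ σ : Cardinal.{0}) (hκinf : ℵ₀ ≤ κ) (hσinf : ℵ₀ ≤ σ)
    (hσ : σ ^ ℵ₀ = σ)
    (u : (κ.ord.ToType → σ.ord.ToType) → κ.ord.ToType → Set σ.ord.ToType)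
    (hufin : ∀ f α, (u f α).Finite)
    (hutrace : ∀ (e : σ.ord.ToType → σ.ord.ToType)
        (f₁ f₂ : κ.ord.ToType → σ.ord.ToType), f₁ = e ∘ f₂ →
        ∀ α₁ α₂, u f₁ α₁ ⊆ e '' u f₂ α₂) :
    ∃ (fs : κ.ord.ToType → σ.ord.ToType) (αs : κ.ord.ToType),
      (∀ (f : κ.ord.ToType → σ.ord.ToType) (α : κ.ord.ToType)
          (e : σ.ord.ToType → σ.ord.ToType), fs = e ∘ f →
          (u f α).ncard = (u fs αs).ncard) ∧
      (∀ (f : κ.ord.ToType → σ.ord.ToType) (α : κ.ord.ToType)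
          (e : σ.ord.ToType → σ.ord.ToType), fs = e ∘ f →
          Set.BijOn e (u f α) (u fs αs)) := by
  have hKne : Nonempty κ.ord.ToType := by
    rw [← Cardinal.mk_ne_zero_iff, Cardinal.mk_ord_toType]
    intro h
    rw [h] at hκinf
    simp at hκinf
    exact Cardinal.aleph0_ne_zero hκinf
  have hTne : Nonempty σ.ord.ToType := by
    rw [← Cardinal.mk_ne_zero_iff, Cardinal.mk_ord_toType]
    intro h
    rw [h] at hσinf
    simp at hσinf
    exact Cardinal.aleph0_ne_zero hσinf
  -- a bijection coding sequences
  have hmk : #(ℕ → σ.ord.ToType) = #σ.ord.ToType := by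
    rw [← Cardinal.power_def, Cardinal.mk_ord_toType, Cardinal.mk_denumerable, hσ]
  obtain ⟨b⟩ := Cardinal.eq.mp hmk
  -- the set of trace cardinalities
  set S : Set ℕ := {n | ∃ f α, (u f α).ncard = n} with hS
  have hSne : S.Nonempty := ⟨_, Classical.arbitrary _, Classical.arbitrary _, rfl⟩
  have hSbdd : BddAbove S := by
    by_contra hbd
    rw [not_bddAbove_iff] at hbd
    have hch : ∀ n : ℕ, ∃ f : κ.ord.ToType → σ.ord.ToType, ∃ α, n < (u f α).ncard := by
      intro n
      obtain ⟨m, ⟨f, α, hm⟩, hnm⟩ := hbd n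
      exact ⟨f, α, hm ▸ hnm⟩
    choose f α hf using hch
    set F : κ.ord.ToType → σ.ord.ToType := fun x => b (fun n => f n x) with hF
    have key : ∀ n : ℕ, n < (u F (Classical.arbitrary _)).ncard := by
      intro n
      have hcomp : f n = (fun s => b.symm s n) ∘ F := by
        funext x
        simp [hF]
      have hsub := hutrace _ _ _ hcomp (α n) (Classical.arbitrary _)
      calc n < (u (f n) (α n)).ncard := hf n
        _ ≤ ((fun s => b.symm s n) '' u F (Classical.arbitrary _)).ncard :=
            Set.ncard_le_ncard hsub ((hufin _ _).image _)
        _ ≤ (u F (Classical.arbitrary _)).ncard := Set.ncard_image_le (hufin _ _)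
    exact lt_irrefl _ (key _)
  -- pick a maximizer
  obtain ⟨fs, αs, hmax⟩ : ∃ fs αs, (u fs αs).ncard = sSup S := Nat.sSup_mem hSne hSbdd
  have main : ∀ (f : κ.ord.ToType → σ.ord.ToType) (α : κ.ord.ToType)
      (e : σ.ord.ToType → σ.ord.ToType), fs = e ∘ f →
      (u f α).ncard = (u fs αs).ncard ∧ (u fs αs).ncard = (e '' u f α).ncard ∧
        u fs αs ⊆ e '' u f α := by
    intro f α e he
    have h1 : u fs αs ⊆ e '' u f α := hutrace e fs f he αs α
    have h2 : (u fs αs).ncard ≤ (e '' u f α).ncard :=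
      Set.ncard_le_ncard h1 ((hufin _ _).image _)
    have h3 : (e '' u f α).ncard ≤ (u f α).ncard := Set.ncard_image_le (hufin _ _)
    have h4 : (u f α).ncard ≤ (u fs αs).ncard := hmax ▸ le_csSup hSbdd ⟨f, α, rfl⟩
    exact ⟨by omega, by omega, h1⟩
  refine ⟨fs, αs, fun f α e he => (main f α e he).1, fun f α e he => ?_⟩
  obtain ⟨hc, hc2, h1⟩ := main f α e he
  have himg : u fs αs = e '' u f α :=
    Set.eq_of_subset_of_ncard_le h1 (le_of_eq hc2.symm) ((hufin _ _).image _)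
  have hinj : Set.InjOn e (u f α) :=
    Set.injOn_of_ncard_image_eq (by omega) (hufin _ _)
  exact ⟨fun x hx => himg ▸ Set.mem_image_of_mem e hx, hinj, fun y hy => himg ▸ hy⟩
end

section
/- Let P be a nonempty preorder in which every monotone sequence p : ℕ → P (i.e. p(n) ≤ p(n+1) for all n) has an upper bound, and let n : P → ℕ be monotone (p ≤ q implies n(p) ≤ n(q)). Then there exists p⁎ ∈ P such that n(q) = n(p⁎) for every q ∈ P with p⁎ ≤ q. -/
/-- In a nonempty preorder where every monotone `ℕ`-indexed sequence has an
upper bound, every monotone function `n : P → ℕ` is eventually constant above some point. -/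
theorem stmt_6 {P : Type*} [Preorder P] [Nonempty P]
    (hub : ∀ p : ℕ → P, (∀ k, p k ≤ p (k + 1)) → ∃ b, ∀ k, p k ≤ b)
    (n : P → ℕ) (hn : Monotone n) :
    ∃ p : P, ∀ q : P, p ≤ q → n q = n p := by
  by_contra h
  push_neg at h
  choose f hf hf' using h
  obtain ⟨p0⟩ := ‹Nonempty P›
  set p : ℕ → P := fun k => f^[k] p0 with hp
  have hstep : ∀ k, p k ≤ p (k + 1) := by
    intro k
    simp only [hp, Function.iterate_succ_apply']
    exact hf _
  have hlt : ∀ k, n (p k) < n (p (k + 1)) := by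
    intro k
    have h1 := hf' (p k)
    have h2 := hn (hf (p k))
    have h3 : p (k + 1) = f (p k) := Function.iterate_succ_apply' f k p0
    rw [h3]
    omega
  have hgrow : ∀ k, n (p 0) + k ≤ n (p k) := by
    intro k
    induction k with
    | zero => simp
    | succ m ih => have := hlt m; omega
  obtain ⟨b, hb⟩ := hub p hstep
  have : ∀ k, n (p 0) + k ≤ n b := fun k => (hgrow k).trans (hn (hb k))
  have := this (n b + 1)
  omega
end

section
/- Let D be an ultrafilter on a set X and κ an infinite cardinal. Suppose D is closed under intersections of families of fewer than κ of its members, while there exists some family of κ many members of D whose intersection does not belong to D. Then there exists an ultrafilter E on κ which is closed under intersections of families of fewer than κ of its members and is uniform, i.e. every member of E has cardinality κ. -/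
open Cardinal

/-- If an ultrafilter `D` on `X` is closed under intersections of families of
fewer than `κ` of its members, but some family of `κ` many members of `D` has intersection
not in `D`, then there is a uniform ultrafilter on `κ` closed under intersections of families
of fewer than `κ` of its members. -/
theorem stmt_8 (κ : Cardinal.{0}) (hκinf : ℵ₀ ≤ κ) (X : Type) (D : Ultrafilter X)
    (hcomp : ∀ (ι : Type) (B : ι → Set X), #ι < κ → (∀ i, B i ∈ D) → (⋂ i, B i) ∈ D)
    (hbad : ∃ B : κ.ord.ToType → Set X, (∀ i, B i ∈ D) ∧ (⋂ i, B i) ∉ D) :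
    ∃ E : Ultrafilter κ.ord.ToType,
      (∀ (ι : Type) (B : ι → Set κ.ord.ToType), #ι < κ → (∀ i, B i ∈ E) →
        (⋂ i, B i) ∈ E) ∧
      (∀ A ∈ E, #A = κ) := by
  obtain ⟨B, hB, hBint⟩ := hbad
  let ι : Type := κ.ord.ToType
  have hιcard : #ι = κ := by rw [show #ι = #(κ.ord.ToType) from rfl, Cardinal.mk_toType, Cardinal.card_ord]
  have hne : Nonempty ι := by
    rw [← Cardinal.mk_ne_zero_iff, hιcard]
    intro h
    rw [h] at hκinf
    exact (aleph0_ne_zero (le_zero_iff.1 hκinf))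
  have wf : WellFounded ((· < ·) : ι → ι → Prop) := IsWellFounded.wf
  classical
  set f : X → ι := fun x =>
    if h : ∃ i, x ∉ B i then wf.min {i | x ∉ B i} h else Classical.arbitrary ι with hf
  have hfmem : ∀ x, (∃ i, x ∉ B i) → x ∉ B (f x) := by
    intro x h
    have := wf.min_mem {i | x ∉ B i} h
    simpa [hf, dif_pos h] using this
  set E : Ultrafilter ι := Ultrafilter.map f D with hE
  have hEcomp : ∀ (ι' : Type) (A : ι' → Set ι), #ι' < κ → (∀ i, A i ∈ E) →
      (⋂ i, A i) ∈ E := by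
    intro ι' A hlt hA
    rw [hE, Ultrafilter.mem_map, Set.preimage_iInter]
    exact hcomp ι' _ hlt (fun i => hA i)
  have hsingle : ∀ i : ι, ({i} : Set ι) ∉ E := by
    intro i hi
    rw [hE, Ultrafilter.mem_map] at hi
    have hC : (⋂ j, B j)ᶜ ∈ D := Ultrafilter.compl_mem_iff_notMem.2 hBint
    have hsub : f ⁻¹' {i} ∩ (⋂ j, B j)ᶜ ⊆ (B i)ᶜ := by
      rintro x ⟨hx1, hx2⟩
      have h : ∃ j, x ∉ B j := by simpa [Set.mem_iInter] using hx2
      have hm := hfmem x h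
      rw [Set.mem_preimage, Set.mem_singleton_iff] at hx1
      rwa [hx1] at hm
    have : (B i)ᶜ ∈ D := (D : Filter X).sets_of_superset (Filter.inter_mem hi hC) hsub
    exact (Ultrafilter.compl_mem_iff_notMem.1 this) (hB i)
  refine ⟨E, hEcomp, ?_⟩
  intro A hA
  refine le_antisymm ((Cardinal.mk_set_le A).trans (le_of_eq hιcard)) ?_
  by_contra hlt
  push_neg at hlt
  have hint : (⋂ a : A, ({(a : ι)}ᶜ : Set ι)) = Aᶜ := by
    ext x
    simp only [Set.mem_iInter, Set.mem_compl_iff, Set.mem_singleton_iff, Subtype.forall]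
    constructor
    · intro h hx
      exact h x hx rfl
    · intro h a ha hxa
      exact h (hxa ▸ ha)
  have hAc : (Aᶜ : Set ι) ∉ E := Ultrafilter.compl_notMem_iff.2 hA
  have hex : ∃ a : A, ({(a : ι)}ᶜ : Set ι) ∉ E := by
    by_contra hall
    push_neg at hall
    have hmem : (⋂ a : A, ({(a : ι)}ᶜ : Set ι)) ∈ E := hEcomp A _ hlt hall
    rw [hint] at hmem
    exact hAc hmem
  obtain ⟨a, ha⟩ := hex
  have : ({(a : ι)} : Set ι) ∈ E := by
    rcases E.mem_or_compl_mem {(a : ι)} with h | h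
    · exact h
    · exact absurd h ha
  exact hsingle _ this
end
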